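/- For any operator W on (C^2)^{⊗N_A} arising as the partial trace Tr_B(T^j) of a power of the cyclic shift, its trace norm satisfies ‖Tr_B(T^j)‖_1 ≤ 2^{N_A} · 2^{gcd(N,j) - min(N_A, gcd(N,j))}; in particular, when gcd(N,j) ≤ N_A, Tr_B(T^j) is a permutation matrix on (C^2)^{⊗N_A} times a nonnegative integer, and ‖Tr_B(T^j)‖_1 ≤ 2^{N_A}. Consequently, (1/2^N)‖Σ_{j=1}^{N-1} e^{2πijk/N} Tr_B(T^j)‖_1 ≤ (N-1)/2^{N_B} when N is prime and N_A ≥ 2. -/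

import Mathlib

open scoped Real ComplexOrder

/-- The cyclic shift operator on `(ℂ^d)^{⊗N}` in the computational basis. -/
def shiftMatrix (N d : ℕ) [NeZero N] : Matrix (Fin N → Fin d) (Fin N → Fin d) ℂ :=
  Matrix.of fun s t => if (∀ i, s i = t (i - 1)) then 1 else 0

instance (N_A N_B : ℕ) [NeZero N_A] : NeZero (N_A + N_B) :=
  ⟨by have := NeZero.pos N_A; omega⟩

/-- Partial trace over the last `N_B` tensor factors. -/
noncomputable def ptraceB {N_A N_B d : ℕ}
    (M : Matrix (Fin (N_A + N_B) → Fin d) (Fin (N_A + N_B) → Fin d) ℂ) :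
    Matrix (Fin N_A → Fin d) (Fin N_A → Fin d) ℂ :=
  Matrix.of fun a a' => ∑ b : Fin N_B → Fin d, M (Fin.append a b) (Fin.append a' b)

/-- The trace norm (Schatten 1-norm) of a square complex matrix: `Tr √(MᴴM)`. -/
noncomputable def traceNorm {n : Type*} [Fintype n] [DecidableEq n]
    (M : Matrix n n ℂ) : ℝ :=
  ((Matrix.isHermitian_conjTranspose_mul_self M).eigenvectorUnitary.1 *
    Matrix.diagonal (((↑) : ℝ → ℂ) ∘ (√·) ∘ (Matrix.isHermitian_conjTranspose_mul_self M).eigenvalues) *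
    (star (Matrix.isHermitian_conjTranspose_mul_self M).eigenvectorUnitary : Matrix n n ℂ)).trace.re

/-- The permutation matrix of a permutation `σ`. -/
def permMat {n : Type*} [Fintype n] [DecidableEq n] (σ : Equiv.Perm n) :
    Matrix n n ℂ :=
  Matrix.of fun i j => if i = σ j then 1 else 0


namespace CycAux

open Finset Matrix
open Fin.CommRing
set_option linter.unusedSectionVars false

/-! ### Step machinery on `Fin N` -/

section Steps

variable {N : ℕ} [NeZero N]

def stepT (j : ℕ) (p : Fin N) (t : ℕ) : Fin N := p - (t : Fin N) * (j : Fin N)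

def reach (j N_A : ℕ) (p : Fin N) : Prop := ∃ t, (stepT j p t).val < N_A

variable {j N_A : ℕ}

lemma stepT_zero (p : Fin N) : stepT j p 0 = p := by simp [stepT]

lemma stepT_succ (p : Fin N) (t : ℕ) :
    stepT j p (t + 1) = stepT j p t - (j : Fin N) := by
  simp only [stepT]; push_cast; ring

lemma stepT_succ' (p : Fin N) (t : ℕ) :
    stepT j p (t + 1) = stepT j (p - (j : Fin N)) t := by
  simp only [stepT]; push_cast; ring

lemma stepT_add (p : Fin N) (s t : ℕ) :
    stepT j p (s + t) = stepT j (stepT j p s) t := by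
  simp only [stepT]; push_cast; ring

lemma stepT_inj {p q : Fin N} {t : ℕ} (h : stepT j p t = stepT j q t) : p = q := by
  simpa [stepT, sub_left_inj] using h

lemma reach_back (p : Fin N) (h : reach j N_A p) (hp : ¬ p.val < N_A) :
    ∃ h' : reach j N_A (p - (j : Fin N)), Nat.find h = Nat.find h' + 1 ∧
      stepT j p (Nat.find h) = stepT j (p - (j : Fin N)) (Nat.find h') := by
  have h0 : Nat.find h ≠ 0 := by
    intro e
    have := Nat.find_spec h
    rw [e, stepT_zero] at this
    exact hp this
  have key : (stepT j (p - (j : Fin N)) (Nat.find h - 1)).val < N_A := by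
    have he : Nat.find h - 1 + 1 = Nat.find h := by omega
    rw [← stepT_succ', he]
    exact Nat.find_spec h
  have h' : reach j N_A (p - (j : Fin N)) := ⟨Nat.find h - 1, key⟩
  have h1 : Nat.find h' ≤ Nat.find h - 1 := Nat.find_min' h' key
  have h2 : Nat.find h ≤ Nat.find h' + 1 := by
    apply Nat.find_min' h
    rw [stepT_succ']
    exact Nat.find_spec h'
  have heq : Nat.find h = Nat.find h' + 1 := by omega
  exact ⟨h', heq, by rw [heq, stepT_succ']⟩

lemma prop_eq (x : Fin N → Fin 2)
    (hx : ∀ p : Fin N, N_A ≤ p.val → x p = x (p - (j : Fin N)))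
    (p : Fin N) (h : reach j N_A p) : x p = x (stepT j p (Nat.find h)) := by
  suffices aux : ∀ n (p : Fin N) (h : reach j N_A p), Nat.find h ≤ n →
      x p = x (stepT j p (Nat.find h)) from aux _ p h le_rfl
  intro n
  induction n with
  | zero =>
    intro p h hn
    have h0 : Nat.find h = 0 := Nat.le_zero.mp hn
    rw [h0, stepT_zero]
  | succ n ih =>
    intro p h hn
    by_cases hp : p.val < N_A
    · have h0 : Nat.find h = 0 := (Nat.find_eq_zero h).mpr (by rw [stepT_zero]; exact hp)
      rw [h0, stepT_zero]
    · obtain ⟨h', heq, hstep⟩ := reach_back p h hp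
      calc x p = x (p - (j : Fin N)) := hx p (le_of_not_gt hp)
        _ = x (stepT j (p - (j : Fin N)) (Nat.find h')) := ih _ h' (by omega)
        _ = x (stepT j p (Nat.find h)) := by rw [hstep]

lemma const_orbit (x : Fin N → Fin 2)
    (hx : ∀ p : Fin N, N_A ≤ p.val → x p = x (p - (j : Fin N)))
    (p : Fin N) (hnr : ¬ reach j N_A p) (t : ℕ) : x (stepT j p t) = x p := by
  induction t with
  | zero => rw [stepT_zero]
  | succ t ih =>
    rw [stepT_succ]
    have hge : N_A ≤ (stepT j p t).val := le_of_not_gt (fun hlt => hnr ⟨t, hlt⟩)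
    rw [← hx _ hge]
    exact ih

lemma exists_mul_eq (c : ℕ) (hc : Nat.gcd N j ∣ c) :
    ∃ t : ℕ, (t : Fin N) * (j : Fin N) = (c : Fin N) := by
  obtain ⟨s, hs⟩ := hc
  have hN : (N : ℤ) ≠ 0 := by exact_mod_cast (NeZero.ne N)
  set u := Nat.gcdA N j with hu
  set v := Nat.gcdB N j with hv
  have hg : (Nat.gcd N j : ℤ) = N * u + j * v := Nat.gcd_eq_gcd_ab N j
  refine ⟨((v * s) % N).toNat, ?_⟩
  have h0 : (0 : ℤ) ≤ (v * s) % N := Int.emod_nonneg _ hN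
  have hmod : ((((v * s) % N).toNat : ℤ) * j) ≡ (c : ℤ) [ZMOD N] := by
    have e1 : (((v * s) % N).toNat : ℤ) ≡ v * s [ZMOD N] := by
      rw [Int.toNat_of_nonneg h0]
      exact Int.mod_modEq _ _
    have e2 : ((((v * s) % N).toNat : ℤ) * j) ≡ v * s * j [ZMOD N] := e1.mul_right _
    refine e2.trans ?_
    have hcz : (c : ℤ) = (Nat.gcd N j : ℤ) * s := by exact_mod_cast hs
    rw [Int.modEq_iff_dvd]
    refine ⟨u * s, ?_⟩
    rw [hcz, hg]; ring
  have := (CharP.intCast_eq_intCast (Fin N) N).mpr hmod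
  push_cast at this
  exact_mod_cast this

lemma step_to_rep (j : ℕ) (p : Fin N) :
    ∃ t, (stepT j p t).val = p.val % Nat.gcd N j := by
  set g := Nat.gcd N j with hgdef
  have hgpos : 0 < g := Nat.gcd_pos_of_pos_left _ (NeZero.pos N)
  have hgN : g ≤ N := Nat.le_of_dvd (NeZero.pos N) (Nat.gcd_dvd_left N j)
  have hdvd : g ∣ (p.val - p.val % g) := by
    have := Nat.div_add_mod p.val g
    exact ⟨p.val / g, by omega⟩
  obtain ⟨t, ht⟩ := exists_mul_eq _ hdvd
  refine ⟨t, ?_⟩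
  obtain ⟨r, hr⟩ : ∃ r, r = p.val % g := ⟨_, rfl⟩
  obtain ⟨c, hc⟩ : ∃ c, c = p.val - p.val % g := ⟨_, rfl⟩
  have hsplit : ((c : ℕ) : Fin N) + ((r : ℕ) : Fin N) = p := by
    rw [← Nat.cast_add, hc, hr, Nat.sub_add_cancel (Nat.mod_le _ _), Fin.cast_val_eq_self]
  have hstep : stepT j p t = ((r : ℕ) : Fin N) := by
    rw [stepT, ht, ← hc, ← hsplit]; ring
  rw [hstep, hr, Fin.val_cast_of_lt (lt_of_lt_of_le (Nat.mod_lt _ hgpos) hgN)]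

lemma reach_of_gcd_le (hg : Nat.gcd N j ≤ N_A) (p : Fin N) : reach j N_A p := by
  obtain ⟨t, ht⟩ := step_to_rep j p
  have hgpos : 0 < Nat.gcd N j := Nat.gcd_pos_of_pos_left _ (NeZero.pos N)
  exact ⟨t, by rw [ht]; exact lt_of_lt_of_le (Nat.mod_lt _ hgpos) hg⟩

lemma reach_sub (i : Fin N) (hi : i.val < N_A) : reach j N_A (i - (j : Fin N)) := by
  refine ⟨N - 1, ?_⟩
  have hkey : stepT j (i - (j : Fin N)) (N - 1) = i := by
    have h2 : ((N - 1 : ℕ) : Fin N) + ((1 : ℕ) : Fin N) = 0 := by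
      rw [← Nat.cast_add, show N - 1 + 1 = N from by
        have := NeZero.pos N; omega, Fin.natCast_self]
    rw [Nat.cast_one] at h2
    have h1 : ((N - 1 : ℕ) : Fin N) = -1 := eq_neg_of_add_eq_zero_left h2
    rw [stepT, h1]
    ring
  rw [hkey]; exact hi

noncomputable def anch (j N_A : ℕ) (p : Fin N) (h : reach j N_A p) : Fin N_A :=
  ⟨(stepT j p (Nat.find h)).val, Nat.find_spec h⟩

lemma anch_of_lt {p : Fin N} (hp : p.val < N_A) (h : reach j N_A p) :
    anch j N_A p h = ⟨p.val, hp⟩ := by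
  have h0 : Nat.find h = 0 := (Nat.find_eq_zero h).mpr (by rw [stepT_zero]; exact hp)
  simp only [anch, h0, stepT_zero]

end Steps

section AlphaHat

variable {N : ℕ} [NeZero N] {j N_A : ℕ}

def eA (hAN : N_A ≤ N) (i : Fin N_A) : Fin N := ⟨i.val, lt_of_lt_of_le i.isLt hAN⟩

noncomputable def alphaHat (j : ℕ) (hAN : N_A ≤ N) (i : Fin N_A) : Fin N_A :=
  anch j N_A (eA hAN i - (j : Fin N)) (reach_sub (eA hAN i) i.isLt)

lemma inj_aux (hAN : N_A ≤ N) (i1 i2 : Fin N_A)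
    (h1 : reach j N_A (eA hAN i1 - (j : Fin N)))
    (h2 : reach j N_A (eA hAN i2 - (j : Fin N)))
    (hstep : stepT j (eA hAN i1 - (j : Fin N)) (Nat.find h1)
           = stepT j (eA hAN i2 - (j : Fin N)) (Nat.find h2))
    (hle : Nat.find h1 ≤ Nat.find h2) : i1 = i2 := by
  set t1 := Nat.find h1 with ht1
  set t2 := Nat.find h2 with ht2
  have hsplit : stepT j (eA hAN i2 - (j : Fin N)) t2
      = stepT j (stepT j (eA hAN i2 - (j : Fin N)) (t2 - t1)) t1 := by
    rw [← stepT_add, Nat.sub_add_cancel hle]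
  have hp : eA hAN i1 - (j : Fin N) = stepT j (eA hAN i2 - (j : Fin N)) (t2 - t1) := by
    apply stepT_inj (t := t1)
    rw [hstep, hsplit]
  rcases Nat.eq_or_lt_of_le hle with he | hlt
  · rw [← he, Nat.sub_self, stepT_zero] at hp
    have heA : eA hAN i1 = eA hAN i2 := sub_left_inj.mp hp
    have hv : (eA hAN i1).val = (eA hAN i2).val := congrArg Fin.val heA
    exact Fin.ext hv
  · have hs : t2 - t1 = (t2 - t1 - 1) + 1 := by omega
    have hEq : eA hAN i1 = stepT j (eA hAN i2 - (j : Fin N)) (t2 - t1 - 1) := by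
      rw [hs, stepT_succ] at hp
      exact sub_left_inj.mp hp
    have hlt' : t2 - t1 - 1 < t2 := by omega
    have hcontra := Nat.find_min h2 hlt'
    exact absurd (by rw [← hEq]; exact i1.isLt) hcontra

lemma alphaHat_inj (hAN : N_A ≤ N) : Function.Injective (alphaHat (N := N) j hAN) := by
  intro i1 i2 heq
  have h1 : reach j N_A (eA hAN i1 - (j : Fin N)) := reach_sub _ i1.isLt
  have h2 : reach j N_A (eA hAN i2 - (j : Fin N)) := reach_sub _ i2.isLt
  have hstep : stepT j (eA hAN i1 - (j : Fin N)) (Nat.find h1)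
      = stepT j (eA hAN i2 - (j : Fin N)) (Nat.find h2) := by
    have hv := congrArg Fin.val heq
    simp only [alphaHat, anch] at hv
    exact Fin.ext hv
  rcases le_total (Nat.find h1) (Nat.find h2) with h | h
  · exact inj_aux hAN i1 i2 h1 h2 hstep h
  · exact (inj_aux hAN i2 i1 h2 h1 hstep.symm h).symm

end AlphaHat


/-! ### Trace norm vs Frobenius-type bounds -/

section TraceNorm

variable {n : Type*} [Fintype n] [DecidableEq n]

noncomputable def fsq (M : Matrix n n ℂ) : ℝ := ∑ i, ∑ k, Complex.normSq (M k i)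

lemma fsq_nonneg (M : Matrix n n ℂ) : 0 ≤ fsq M :=
  Finset.sum_nonneg fun _ _ => Finset.sum_nonneg fun _ _ => Complex.normSq_nonneg _

lemma trace_conj_mul (A : Matrix n n ℂ) : (Aᴴ * A).trace = (fsq A : ℂ) := by
  simp only [Matrix.trace, Matrix.diag_apply, Matrix.mul_apply, Matrix.conjTranspose_apply, fsq]
  push_cast
  refine Finset.sum_congr rfl fun i _ => Finset.sum_congr rfl fun k _ => ?_
  exact (Complex.normSq_eq_conj_mul_self).symm

lemma traceNorm_le_sqrt (M : Matrix n n ℂ) :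
    traceNorm M ≤ Real.sqrt ((Fintype.card n : ℝ) * fsq M) := by
  have hA := Matrix.isHermitian_conjTranspose_mul_self M
  have hev : ∀ i, 0 ≤ hA.eigenvalues i :=
    fun i => (Matrix.posSemidef_conjTranspose_mul_self M).eigenvalues_nonneg i
  have htr : traceNorm M = ∑ i, √(hA.eigenvalues i) := by
    unfold traceNorm
    rw [Matrix.trace_mul_comm, ← mul_assoc,
      Unitary.star_mul_self_of_mem hA.eigenvectorUnitary.2, one_mul, Matrix.trace_diagonal,
      Complex.re_sum]
    rfl
  have hsum : ∑ i, hA.eigenvalues i = fsq M := by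
    have h := hA.trace_eq_sum_eigenvalues
    rw [trace_conj_mul] at h
    have h2 : ((∑ i, hA.eigenvalues i : ℝ) : ℂ) = (fsq M : ℂ) := by
      push_cast; exact h.symm
    exact Complex.ofReal_injective h2
  have hnn : 0 ≤ traceNorm M := by
    rw [htr]; exact Finset.sum_nonneg fun i _ => Real.sqrt_nonneg _
  have hsq : (traceNorm M) ^ 2 ≤ (Fintype.card n : ℝ) * fsq M := by
    rw [htr, ← hsum]
    calc (∑ i, √(hA.eigenvalues i)) ^ 2
        ≤ (Finset.univ.card : ℝ) * ∑ i, (√(hA.eigenvalues i)) ^ 2 :=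
          sq_sum_le_card_mul_sum_sq
      _ = (Fintype.card n : ℝ) * ∑ i, hA.eigenvalues i := by
          rw [Finset.card_univ]
          congr 1
          exact Finset.sum_congr rfl fun i _ => Real.sq_sqrt (hev i)
  exact (Real.le_sqrt hnn (mul_nonneg (by positivity) (fsq_nonneg M))).mpr hsq

end TraceNorm


/-! ### Entries of powers of the shift matrix -/

lemma shift_pow_apply (N : ℕ) [NeZero N] (j : ℕ) (s t : Fin N → Fin 2) :
    (shiftMatrix N 2 ^ j) s t = if (∀ i, s i = t (i - (j : Fin N))) then 1 else 0 := by
  induction j generalizing t with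
  | zero =>
    simp [pow_zero, Matrix.one_apply, funext_iff]
  | succ n ih =>
    rw [pow_succ, Matrix.mul_apply]
    have hT : ∀ u : Fin N → Fin 2,
        shiftMatrix N 2 u t = if u = (fun i => t (i - 1)) then (1 : ℂ) else 0 := by
      intro u
      have hiff : (∀ i, u i = t (i - 1)) ↔ u = fun i => t (i - 1) := funext_iff.symm
      simp only [shiftMatrix, Matrix.of_apply, hiff]
    simp only [hT, ih]
    rw [Finset.sum_eq_single (fun i => t (i - 1))]
    · rw [if_pos rfl, mul_one]
      refine if_congr (forall_congr' fun i => ?_) rfl rfl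
      have harith : i - (n : Fin N) - 1 = i - ((n + 1 : ℕ) : Fin N) := by
        push_cast; ring
      show s i = t (i - (n : Fin N) - 1) ↔ s i = t (i - ((n + 1 : ℕ) : Fin N))
      rw [harith]
    · intro u _ hne
      rw [if_neg hne, mul_zero]
    · intro h
      exact absurd (Finset.mem_univ _) h

section Main

variable (N_A N_B : ℕ) [NeZero N_A] [NeZero N_B]

def Vc (j : ℕ) (x : Fin (N_A + N_B) → Fin 2) : Prop :=
  ∀ p : Fin (N_A + N_B), N_A ≤ p.val → x p = x (p - (j : Fin (N_A + N_B)))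

instance (j : ℕ) : DecidablePred (Vc N_A N_B j) := fun x => by unfold Vc; infer_instance

lemma append_lt (a : Fin N_A → Fin 2) (b : Fin N_B → Fin 2) (p : Fin (N_A + N_B))
    (h : p.val < N_A) : Fin.append a b p = a ⟨p.val, h⟩ := by
  have hp : p = Fin.castAdd N_B ⟨p.val, h⟩ := Fin.ext rfl
  conv_lhs => rw [hp]
  rw [Fin.append_left]

lemma append_ge (a : Fin N_A → Fin 2) (b : Fin N_B → Fin 2) (p : Fin (N_A + N_B))
    (h : N_A ≤ p.val) :
    Fin.append a b p = b ⟨p.val - N_A, by have := p.isLt; omega⟩ := by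
  have hp : p = Fin.natAdd N_A ⟨p.val - N_A, by have := p.isLt; omega⟩ := by
    apply Fin.ext
    show p.val = N_A + (p.val - N_A)
    omega
  conv_lhs => rw [hp]
  rw [Fin.append_right]

lemma cond_iff (j : ℕ) (a a' : Fin N_A → Fin 2) (b : Fin N_B → Fin 2) :
    (∀ i : Fin (N_A + N_B),
        Fin.append a b i = Fin.append a' b (i - (j : Fin (N_A + N_B))))
    ↔ (Vc N_A N_B j (Fin.append a' b) ∧
       ∀ i : Fin N_A, a i = Fin.append a' b
         (eA (Nat.le_add_right N_A N_B) i - (j : Fin (N_A + N_B)))) := by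
  constructor
  · intro h
    refine ⟨?_, ?_⟩
    · intro p hp
      have e1 := append_ge N_A N_B a b p hp
      have e2 := append_ge N_A N_B a' b p hp
      rw [e2, ← e1]
      exact h p
    · intro i
      have h2 := h (eA (Nat.le_add_right N_A N_B) i)
      rw [append_lt N_A N_B a b _ i.isLt] at h2
      have hia : a (⟨(eA (Nat.le_add_right N_A N_B) i).val, i.isLt⟩ : Fin N_A) = a i :=
        congrArg a (Fin.ext rfl)
      rw [hia] at h2
      exact h2
  · rintro ⟨hV, hA⟩ p
    by_cases hp : p.val < N_A
    · have hpe : p = eA (Nat.le_add_right N_A N_B) (⟨p.val, hp⟩ : Fin N_A) := Fin.ext rfl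
      rw [append_lt N_A N_B a b p hp]
      calc a ⟨p.val, hp⟩
          = Fin.append a' b (eA (Nat.le_add_right N_A N_B) ⟨p.val, hp⟩
              - (j : Fin (N_A + N_B))) := hA _
        _ = Fin.append a' b (p - (j : Fin (N_A + N_B))) := by rw [← hpe]
    · push_neg at hp
      rw [append_ge N_A N_B a b p hp, ← append_ge N_A N_B a' b p hp]
      exact hV p hp

def fibS (j : ℕ) (a' : Fin N_A → Fin 2) : Finset (Fin N_B → Fin 2) :=
  Finset.univ.filter (fun b => Vc N_A N_B j (Fin.append a' b))

lemma ptrace_entry (j : ℕ) (a a' : Fin N_A → Fin 2) :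
    ptraceB (shiftMatrix (N_A + N_B) 2 ^ j) a a'
      = (((Finset.univ.filter (fun b : Fin N_B → Fin 2 =>
          Vc N_A N_B j (Fin.append a' b) ∧
          ∀ i : Fin N_A, a i = Fin.append a' b
            (eA (Nat.le_add_right N_A N_B) i - (j : Fin (N_A + N_B))))).card : ℕ) : ℂ) := by
  unfold ptraceB
  simp only [Matrix.of_apply]
  simp_rw [shift_pow_apply]
  rw [Finset.sum_congr rfl (fun b _ => if_congr (cond_iff N_A N_B j a a' b) rfl rfl)]
  rw [Finset.sum_boole]

lemma det_a (j : ℕ) (a' : Fin N_A → Fin 2) (b : Fin N_B → Fin 2)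
    (hb : Vc N_A N_B j (Fin.append a' b)) (i : Fin N_A) :
    Fin.append a' b (eA (Nat.le_add_right N_A N_B) i - (j : Fin (N_A + N_B)))
      = a' (alphaHat j (Nat.le_add_right N_A N_B) i) := by
  have h : reach j N_A (eA (Nat.le_add_right N_A N_B) i - (j : Fin (N_A + N_B))) :=
    reach_sub _ i.isLt
  have h1 := prop_eq (Fin.append a' b) hb _ h
  rw [h1, append_lt N_A N_B a' b _ (Nat.find_spec h)]
  rfl

end Main

section Main2

variable (N_A N_B : ℕ) [NeZero N_A] [NeZero N_B]

lemma filter_empty (j : ℕ) (a a' : Fin N_A → Fin 2)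
    (hne : a ≠ fun i => a' (alphaHat j (Nat.le_add_right N_A N_B) i)) :
    (Finset.univ.filter (fun b : Fin N_B → Fin 2 =>
          Vc N_A N_B j (Fin.append a' b) ∧
          ∀ i : Fin N_A, a i = Fin.append a' b
            (eA (Nat.le_add_right N_A N_B) i - (j : Fin (N_A + N_B))))) = ∅ := by
  rw [Finset.filter_eq_empty_iff]
  rintro b - ⟨hV, hA⟩
  apply hne
  funext i
  rw [hA i, det_a N_A N_B j a' b hV i]

lemma filter_fib (j : ℕ) (a a' : Fin N_A → Fin 2)
    (he : a = fun i => a' (alphaHat j (Nat.le_add_right N_A N_B) i)) :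
    (Finset.univ.filter (fun b : Fin N_B → Fin 2 =>
          Vc N_A N_B j (Fin.append a' b) ∧
          ∀ i : Fin N_A, a i = Fin.append a' b
            (eA (Nat.le_add_right N_A N_B) i - (j : Fin (N_A + N_B)))))
      = fibS N_A N_B j a' := by
  unfold fibS
  refine Finset.filter_congr fun b _ => ?_
  constructor
  · exact fun h => h.1
  · intro hV
    refine ⟨hV, fun i => ?_⟩
    rw [he]
    exact (det_a N_A N_B j a' b hV i).symm

lemma fib_card_le (j : ℕ) (a' : Fin N_A → Fin 2) :
    (fibS N_A N_B j a').card ≤ 2 ^ (Nat.gcd (N_A + N_B) j - N_A) := by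
  classical
  have hgpos : 0 < Nat.gcd (N_A + N_B) j := Nat.gcd_pos_of_pos_left _ (NeZero.pos _)
  have hgN : Nat.gcd (N_A + N_B) j ≤ N_A + N_B :=
    Nat.le_of_dvd (NeZero.pos _) (Nat.gcd_dvd_left _ _)
  set g := Nat.gcd (N_A + N_B) j with hg
  have key : (fibS N_A N_B j a').card
      ≤ Fintype.card ({r // r ∈ Finset.Ico N_A g} → Fin 2) := by
    apply Finset.card_le_card_of_injOn
      (fun b (r : {r // r ∈ Finset.Ico N_A g}) =>
        Fin.append a' b ((r.val : ℕ) : Fin (N_A + N_B)))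
      (fun _ _ => Finset.mem_univ _)
    intro b1 hb1 b2 hb2 h
    rw [Finset.mem_coe, fibS, Finset.mem_filter] at hb1 hb2
    funext q
    set p : Fin (N_A + N_B) := ⟨N_A + q.val, by have := q.isLt; omega⟩ with hpdef
    have hple : N_A ≤ p.val := Nat.le_add_right N_A q.val
    have hb1e : Fin.append a' b1 p = b1 q := by
      rw [append_ge N_A N_B a' b1 p hple]
      exact congrArg b1 (Fin.ext (by show N_A + q.val - N_A = q.val; omega))
    have hb2e : Fin.append a' b2 p = b2 q := by
      rw [append_ge N_A N_B a' b2 p hple]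
      exact congrArg b2 (Fin.ext (by show N_A + q.val - N_A = q.val; omega))
    have hxp : Fin.append a' b1 p = Fin.append a' b2 p := by
      by_cases hr : reach j N_A p
      · have e1 := prop_eq (Fin.append a' b1) hb1.2 p hr
        have e2 := prop_eq (Fin.append a' b2) hb2.2 p hr
        rw [e1, e2, append_lt N_A N_B a' b1 _ (Nat.find_spec hr),
            append_lt N_A N_B a' b2 _ (Nat.find_spec hr)]
      · obtain ⟨t, ht⟩ := step_to_rep j p
        rw [← hg] at ht
        have hge : N_A ≤ p.val % g := by
          by_contra hlt
          exact hr ⟨t, by rw [ht]; omega⟩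
        have hltg : p.val % g < g := Nat.mod_lt _ hgpos
        have e1 := const_orbit (Fin.append a' b1) hb1.2 p hr t
        have e2 := const_orbit (Fin.append a' b2) hb2.2 p hr t
        have hcast : stepT j p t = ((p.val % g : ℕ) : Fin (N_A + N_B)) := by
          apply Fin.ext
          rw [ht, Fin.val_cast_of_lt (lt_of_lt_of_le hltg hgN)]
        have himg := congrFun h ⟨p.val % g, Finset.mem_Ico.mpr ⟨hge, hltg⟩⟩
        rw [← e1, ← e2, hcast]
        exact himg
    rw [← hb1e, hxp, hb2e]
  have hcardfun : Fintype.card ({r // r ∈ Finset.Ico N_A g} → Fin 2) = 2 ^ (g - N_A) := by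
    rw [Fintype.card_fun, Fintype.card_fin, Fintype.card_coe, Nat.card_Ico]
  omega

lemma fib_card_one (j : ℕ) (hgle : Nat.gcd (N_A + N_B) j ≤ N_A) (a' : Fin N_A → Fin 2) :
    (fibS N_A N_B j a').card = 1 := by
  have hle : (fibS N_A N_B j a').card ≤ 1 := by
    have h := fib_card_le N_A N_B j a'
    rwa [Nat.sub_eq_zero_of_le hgle, pow_zero] at h
  have hall : ∀ p : Fin (N_A + N_B), reach j N_A p := reach_of_gcd_le hgle
  set x0 : Fin (N_A + N_B) → Fin 2 := fun p => a' (anch j N_A p (hall p)) with hx0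
  set b0 : Fin N_B → Fin 2 :=
    fun q => x0 ⟨N_A + q.val, by have := q.isLt; omega⟩ with hb0
  have happ : Fin.append a' b0 = x0 := by
    funext p
    by_cases hp : p.val < N_A
    · rw [append_lt N_A N_B a' b0 p hp]
      show a' ⟨p.val, hp⟩ = a' (anch j N_A p (hall p))
      rw [anch_of_lt hp (hall p)]
    · push_neg at hp
      rw [append_ge N_A N_B a' b0 p hp]
      simp only [hb0]
      exact congrArg x0 (Fin.ext (by show N_A + (p.val - N_A) = p.val; omega))
  have hVx : Vc N_A N_B j (Fin.append a' b0) := by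
    rw [happ]
    intro p hp
    have hnp : ¬ p.val < N_A := not_lt.mpr hp
    obtain ⟨h', heq, hstep⟩ := reach_back p (hall p) hnp
    simp only [hx0]
    congr 1
    apply Fin.ext
    simp only [anch]
    rw [hstep]
  have hmem : b0 ∈ fibS N_A N_B j a' :=
    Finset.mem_filter.mpr ⟨Finset.mem_univ _, hVx⟩
  have hpos : 0 < (fibS N_A N_B j a').card := Finset.card_pos.mpr ⟨b0, hmem⟩
  omega

end Main2

section Main3

variable (N_A N_B : ℕ) [NeZero N_A] [NeZero N_B]

lemma master (j : ℕ) (hgle : Nat.gcd (N_A + N_B) j ≤ N_A) :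
    ∃ σ : Equiv.Perm (Fin N_A → Fin 2),
      ptraceB (shiftMatrix (N_A + N_B) 2 ^ j) = permMat σ := by
  have hbij : Function.Bijective (alphaHat (N := N_A + N_B) j (Nat.le_add_right N_A N_B)) :=
    Finite.injective_iff_bijective.mp (alphaHat_inj _)
  set σ0 : Equiv.Perm (Fin N_A → Fin 2) :=
    ((Equiv.ofBijective _ hbij).arrowCongr (Equiv.refl (Fin 2))).symm with hσ0
  refine ⟨σ0, ?_⟩
  ext a a'
  have hσ : σ0 a' = fun i => a' (alphaHat j (Nat.le_add_right N_A N_B) i) := by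
    funext i
    simp [hσ0, Equiv.arrowCongr, Equiv.ofBijective]
  have hpm : permMat σ0 a a' = if a = σ0 a' then (1 : ℂ) else 0 := rfl
  rw [ptrace_entry, hpm, hσ]
  by_cases hc : a = fun i => a' (alphaHat j (Nat.le_add_right N_A N_B) i)
  · rw [filter_fib N_A N_B j a a' hc, fib_card_one N_A N_B j hgle a', if_pos hc]
    simp
  · rw [filter_empty N_A N_B j a a' hc, if_neg hc]
    simp

lemma fsq_permMat {n : Type*} [Fintype n] [DecidableEq n] (σ : Equiv.Perm n) :
    fsq (permMat σ) = (Fintype.card n : ℝ) := by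
  unfold fsq permMat
  simp only [Matrix.of_apply]
  have hterm : ∀ i k : n, Complex.normSq (if k = σ i then (1 : ℂ) else 0)
      = if k = σ i then (1 : ℝ) else 0 := by
    intro i k; split <;> simp
  simp_rw [hterm]
  simp [Finset.sum_ite_eq']

lemma fsq_smul {n : Type*} [Fintype n] [DecidableEq n] (z : ℂ) (M : Matrix n n ℂ) :
    fsq (z • M) = Complex.normSq z * fsq M := by
  unfold fsq
  simp only [Matrix.smul_apply, smul_eq_mul, Complex.normSq_mul, Finset.mul_sum]

lemma fsq_ptrace_bound (j : ℕ) :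
    fsq (ptraceB (shiftMatrix (N_A + N_B) 2 ^ j))
      ≤ 2 ^ N_A * ((2 : ℝ) ^ (Nat.gcd (N_A + N_B) j - N_A)) ^ 2 := by
  have hcol : ∀ a' : Fin N_A → Fin 2,
      (∑ a : Fin N_A → Fin 2,
        Complex.normSq (ptraceB (shiftMatrix (N_A + N_B) 2 ^ j) a a'))
      ≤ ((2 : ℝ) ^ (Nat.gcd (N_A + N_B) j - N_A)) ^ 2 := by
    intro a'
    have hterm : ∀ a : Fin N_A → Fin 2,
        Complex.normSq (ptraceB (shiftMatrix (N_A + N_B) 2 ^ j) a a')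
        = if a = (fun i => a' (alphaHat j (Nat.le_add_right N_A N_B) i))
          then (((fibS N_A N_B j a').card : ℝ)) ^ 2 else 0 := by
      intro a
      rw [ptrace_entry]
      by_cases hc : a = fun i => a' (alphaHat j (Nat.le_add_right N_A N_B) i)
      · rw [if_pos hc, filter_fib N_A N_B j a a' hc]
        rw [show (((fibS N_A N_B j a').card : ℕ) : ℂ)
            = (((fibS N_A N_B j a').card : ℝ) : ℂ) from by push_cast; rfl,
          Complex.normSq_ofReal]
        ring
      · rw [if_neg hc, filter_empty N_A N_B j a a' hc]
        simp
    simp_rw [hterm]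
    rw [Finset.sum_ite_eq' Finset.univ
      (fun i => a' (alphaHat j (Nat.le_add_right N_A N_B) i))
      (fun _ => (((fibS N_A N_B j a').card : ℝ)) ^ 2)]
    rw [if_pos (Finset.mem_univ _)]
    have hle : ((fibS N_A N_B j a').card : ℝ)
        ≤ (2 : ℝ) ^ (Nat.gcd (N_A + N_B) j - N_A) := by
      have := fib_card_le N_A N_B j a'
      exact_mod_cast this
    exact pow_le_pow_left₀ (by positivity) hle 2
  unfold fsq
  calc (∑ a' : Fin N_A → Fin 2, ∑ a : Fin N_A → Fin 2,
        Complex.normSq (ptraceB (shiftMatrix (N_A + N_B) 2 ^ j) a a'))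
      ≤ ∑ _a' : Fin N_A → Fin 2,
        ((2 : ℝ) ^ (Nat.gcd (N_A + N_B) j - N_A)) ^ 2 :=
        Finset.sum_le_sum fun a' _ => hcol a'
    _ = 2 ^ N_A * ((2 : ℝ) ^ (Nat.gcd (N_A + N_B) j - N_A)) ^ 2 := by
        rw [Finset.sum_const, Finset.card_univ, nsmul_eq_mul]
        congr 1
        rw [Fintype.card_fun, Fintype.card_fin, Fintype.card_fin]
        push_cast
        rfl

lemma part1 (j : ℕ) :
    traceNorm (ptraceB (shiftMatrix (N_A + N_B) 2 ^ j))
      ≤ 2 ^ N_A * 2 ^ (Nat.gcd (N_A + N_B) j - min N_A (Nat.gcd (N_A + N_B) j)) := by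
  have h1 := traceNorm_le_sqrt (ptraceB (shiftMatrix (N_A + N_B) 2 ^ j))
  have hcard : (Fintype.card (Fin N_A → Fin 2) : ℝ) = 2 ^ N_A := by
    rw [Fintype.card_fun, Fintype.card_fin, Fintype.card_fin]
    push_cast
    rfl
  have h2 : Real.sqrt ((Fintype.card (Fin N_A → Fin 2) : ℝ)
        * fsq (ptraceB (shiftMatrix (N_A + N_B) 2 ^ j)))
      ≤ (2 : ℝ) ^ N_A * 2 ^ (Nat.gcd (N_A + N_B) j - N_A) := by
    have hstep : (Fintype.card (Fin N_A → Fin 2) : ℝ)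
          * fsq (ptraceB (shiftMatrix (N_A + N_B) 2 ^ j))
        ≤ ((2 : ℝ) ^ N_A * 2 ^ (Nat.gcd (N_A + N_B) j - N_A)) ^ 2 := by
      rw [hcard]
      calc (2 : ℝ) ^ N_A * fsq (ptraceB (shiftMatrix (N_A + N_B) 2 ^ j))
          ≤ (2 : ℝ) ^ N_A * (2 ^ N_A * ((2 : ℝ) ^ (Nat.gcd (N_A + N_B) j - N_A)) ^ 2) :=
            mul_le_mul_of_nonneg_left (fsq_ptrace_bound N_A N_B j) (by positivity)
        _ = ((2 : ℝ) ^ N_A * 2 ^ (Nat.gcd (N_A + N_B) j - N_A)) ^ 2 := by ring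
    calc Real.sqrt _ ≤ Real.sqrt (((2 : ℝ) ^ N_A * 2 ^ (Nat.gcd (N_A + N_B) j - N_A)) ^ 2) :=
          Real.sqrt_le_sqrt hstep
      _ = (2 : ℝ) ^ N_A * 2 ^ (Nat.gcd (N_A + N_B) j - N_A) := Real.sqrt_sq (by positivity)
  have hmin : Nat.gcd (N_A + N_B) j - min N_A (Nat.gcd (N_A + N_B) j)
      = Nat.gcd (N_A + N_B) j - N_A := by omega
  rw [hmin]
  exact h1.trans h2

lemma part2norm (j : ℕ) (σ : Equiv.Perm (Fin N_A → Fin 2))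
    (hσ : ptraceB (shiftMatrix (N_A + N_B) 2 ^ j) = permMat σ) :
    traceNorm (ptraceB (shiftMatrix (N_A + N_B) 2 ^ j)) ≤ 2 ^ N_A := by
  have h1 := traceNorm_le_sqrt (ptraceB (shiftMatrix (N_A + N_B) 2 ^ j))
  have hcard : (Fintype.card (Fin N_A → Fin 2) : ℝ) = 2 ^ N_A := by
    rw [Fintype.card_fun, Fintype.card_fin, Fintype.card_fin]
    push_cast
    rfl
  rw [hσ, fsq_permMat, hcard] at h1
  calc traceNorm (ptraceB (shiftMatrix (N_A + N_B) 2 ^ j))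
      ≤ Real.sqrt ((2 : ℝ) ^ N_A * 2 ^ N_A) := by rw [hσ]; exact h1
    _ = 2 ^ N_A := by
        rw [show ((2 : ℝ) ^ N_A * 2 ^ N_A) = ((2 : ℝ) ^ N_A) ^ 2 by ring]
        exact Real.sqrt_sq (by positivity)

end Main3

section Frob

attribute [local instance] Matrix.frobeniusSeminormedAddCommGroup

lemma norm_eq_sqrt_fsq {m : Type*} [Fintype m] [DecidableEq m] (M : Matrix m m ℂ) :
    ‖M‖ = Real.sqrt (fsq M) := by
  rw [Matrix.frobenius_norm_def, Real.sqrt_eq_rpow]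
  congr 1
  have hterm : ∀ i k : m, ‖M i k‖ ^ (2 : ℝ) = Complex.normSq (M i k) := by
    intro i k
    rw [show (2 : ℝ) = ((2 : ℕ) : ℝ) by norm_num, Real.rpow_natCast,
      Complex.sq_norm]
  simp_rw [hterm]
  unfold fsq
  exact Finset.sum_comm

variable (N_A N_B : ℕ) [NeZero N_A] [NeZero N_B]

lemma part3 (k : ℕ) (hp : (N_A + N_B).Prime) :
    (1 / 2 ^ (N_A + N_B) : ℝ) *
        traceNorm (∑ j ∈ Finset.Icc 1 (N_A + N_B - 1),
          Complex.exp (2 * ↑π * Complex.I * j * k / (N_A + N_B)) •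
            ptraceB (shiftMatrix (N_A + N_B) 2 ^ j)) ≤
      (N_A + N_B - 1 : ℝ) / 2 ^ N_B := by
  set S := (∑ j ∈ Finset.Icc 1 (N_A + N_B - 1),
          Complex.exp (2 * ↑π * Complex.I * j * k / (N_A + N_B)) •
            ptraceB (shiftMatrix (N_A + N_B) 2 ^ j)) with hS
  have hcard : (Fintype.card (Fin N_A → Fin 2) : ℝ) = 2 ^ N_A := by
    rw [Fintype.card_fun, Fintype.card_fin, Fintype.card_fin]
    push_cast
    rfl
  have h1 : traceNorm S ≤ Real.sqrt ((2 : ℝ) ^ N_A) * ‖S‖ := by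
    have h := traceNorm_le_sqrt S
    rwa [hcard, Real.sqrt_mul (by positivity), ← norm_eq_sqrt_fsq] at h
  have hterm : ∀ j ∈ Finset.Icc 1 (N_A + N_B - 1),
      ‖Complex.exp (2 * ↑π * Complex.I * j * k / (N_A + N_B)) •
        ptraceB (shiftMatrix (N_A + N_B) 2 ^ j)‖ = Real.sqrt ((2 : ℝ) ^ N_A) := by
    intro j hj
    rw [Finset.mem_Icc] at hj
    have hg1 : Nat.gcd (N_A + N_B) j = 1 := by
      have hnd : ¬ (N_A + N_B) ∣ j := by
        intro hd
        have hle := Nat.le_of_dvd (by omega) hd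
        have h2 := hp.two_le
        omega
      exact (Nat.Prime.coprime_iff_not_dvd hp).mpr hnd
    have hgle : Nat.gcd (N_A + N_B) j ≤ N_A := by
      rw [hg1]
      exact Nat.one_le_iff_ne_zero.mpr (NeZero.ne N_A)
    obtain ⟨σ, hσ⟩ := master N_A N_B j hgle
    rw [hσ, norm_eq_sqrt_fsq, fsq_smul, fsq_permMat, hcard]
    have habs : Complex.normSq (Complex.exp (2 * ↑π * Complex.I * j * k / (N_A + N_B))) = 1 := by
      have he : (2 * (π : ℂ) * Complex.I * (j : ℂ) * (k : ℂ) / ((N_A : ℂ) + (N_B : ℂ)))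
          = Complex.I * ((2 * π * j * k / (N_A + N_B) : ℝ) : ℂ) := by
        push_cast
        ring
      have hre : (2 * (π : ℂ) * Complex.I * (j : ℂ) * (k : ℂ) / ((N_A : ℂ) + (N_B : ℂ))).re = 0 := by
        rw [he, Complex.mul_re, Complex.I_re, Complex.I_im, Complex.ofReal_re,
          Complex.ofReal_im]
        ring
      rw [Complex.normSq_eq_norm_sq, Complex.norm_exp, hre, Real.exp_zero]
      norm_num
    rw [habs, one_mul]
  have hsum : ∑ j ∈ Finset.Icc 1 (N_A + N_B - 1),
      ‖Complex.exp (2 * ↑π * Complex.I * j * k / (N_A + N_B)) •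
        ptraceB (shiftMatrix (N_A + N_B) 2 ^ j)‖
      = ((N_A + N_B - 1 : ℕ) : ℝ) * Real.sqrt ((2 : ℝ) ^ N_A) := by
    rw [Finset.sum_congr rfl hterm, Finset.sum_const, Nat.card_Icc, nsmul_eq_mul]
    have hn : N_A + N_B - 1 + 1 - 1 = N_A + N_B - 1 := by omega
    rw [hn]
  have h2 : ‖S‖ ≤ ((N_A + N_B - 1 : ℕ) : ℝ) * Real.sqrt ((2 : ℝ) ^ N_A) := by
    rw [← hsum, hS]
    exact norm_sum_le _ _
  have h3 : traceNorm S ≤ ((N_A + N_B - 1 : ℕ) : ℝ) * 2 ^ N_A := by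
    calc traceNorm S ≤ Real.sqrt ((2 : ℝ) ^ N_A) * ‖S‖ := h1
      _ ≤ Real.sqrt ((2 : ℝ) ^ N_A) * (((N_A + N_B - 1 : ℕ) : ℝ) * Real.sqrt ((2 : ℝ) ^ N_A)) :=
          mul_le_mul_of_nonneg_left h2 (Real.sqrt_nonneg _)
      _ = ((N_A + N_B - 1 : ℕ) : ℝ) * (Real.sqrt ((2 : ℝ) ^ N_A) * Real.sqrt ((2 : ℝ) ^ N_A)) := by
          ring
      _ = ((N_A + N_B - 1 : ℕ) : ℝ) * 2 ^ N_A := by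
          rw [Real.mul_self_sqrt (by positivity)]
  have hNpos : 1 ≤ N_A + N_B := by have := NeZero.pos N_A; omega
  have hcast : ((N_A + N_B - 1 : ℕ) : ℝ) = (N_A : ℝ) + (N_B : ℝ) - 1 := by
    rw [Nat.cast_sub hNpos]
    push_cast
    ring
  calc (1 / 2 ^ (N_A + N_B) : ℝ) * traceNorm S
      ≤ (1 / 2 ^ (N_A + N_B) : ℝ) * (((N_A + N_B - 1 : ℕ) : ℝ) * 2 ^ N_A) :=
        mul_le_mul_of_nonneg_left h3 (by positivity)
    _ = (N_A + N_B - 1 : ℝ) / 2 ^ N_B := by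
        rw [hcast, pow_add]
        field_simp

end Frob

end CycAux

/-- Trace-norm bounds on partial traces of powers of the cyclic shift `T` on
`(ℂ^2)^{⊗(N_A+N_B)}`: in general `‖Tr_B(T^j)‖₁ ≤ 2^{N_A}·2^{gcd(N,j) − min(N_A, gcd(N,j))}`;
when `gcd(N,j) ≤ N_A`, `Tr_B(T^j)` is a nonnegative-integer multiple of a permutation matrix and
`‖Tr_B(T^j)‖₁ ≤ 2^{N_A}`; consequently, for prime `N` and `N_A ≥ 2`,
`(1/2^N)‖∑_{j=1}^{N-1} e^{2πijk/N} Tr_B(T^j)‖₁ ≤ (N-1)/2^{N_B}`. -/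
theorem traceNorm_ptraceB_shift_pow (N_A N_B : ℕ) [NeZero N_A] [NeZero N_B] (k : ℕ) :
    (∀ j : ℕ, 1 ≤ j → j ≤ N_A + N_B - 1 →
      traceNorm (ptraceB (shiftMatrix (N_A + N_B) 2 ^ j)) ≤
        2 ^ N_A * 2 ^ (Nat.gcd (N_A + N_B) j - min N_A (Nat.gcd (N_A + N_B) j))) ∧
    (∀ j : ℕ, 1 ≤ j → j ≤ N_A + N_B - 1 → Nat.gcd (N_A + N_B) j ≤ N_A →
      (∃ (σ : Equiv.Perm (Fin N_A → Fin 2)) (c : ℕ),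
          ptraceB (shiftMatrix (N_A + N_B) 2 ^ j) = (c : ℂ) • permMat σ) ∧
      traceNorm (ptraceB (shiftMatrix (N_A + N_B) 2 ^ j)) ≤ 2 ^ N_A) ∧
    ((N_A + N_B).Prime → 2 ≤ N_A →
      (1 / 2 ^ (N_A + N_B) : ℝ) *
        traceNorm (∑ j ∈ Finset.Icc 1 (N_A + N_B - 1),
          Complex.exp (2 * ↑π * Complex.I * j * k / (N_A + N_B)) •
            ptraceB (shiftMatrix (N_A + N_B) 2 ^ j)) ≤
      (N_A + N_B - 1 : ℝ) / 2 ^ N_B) := by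
  refine ⟨fun j _ _ => CycAux.part1 N_A N_B j, fun j _ _ hgle => ?_, fun hp _ => ?_⟩
  · obtain ⟨σ, hσ⟩ := CycAux.master N_A N_B j hgle
    refine ⟨⟨σ, 1, by rw [hσ]; simp⟩, CycAux.part2norm N_A N_B j σ hσ⟩
  · exact CycAux.part3 N_A N_B k hp
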